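/- Let U be a 3×3 symmetric nonnegative matrix satisfying the ultrametric inequality U_{ij} ≥ min(U_{ik}, U_{kj}) for all i,j,k, and suppose U is nonsingular with U_{ii} > max_{j≠i} U_{ij} for all i. Then U⁻¹ is both row and column diagonally dominant, i.e., U⁻¹𝟏 ≥ 0 and 𝟏ᵗU⁻¹ ≥ 0 entrywise, and U⁻¹ has nonpositive off-diagonal entries. -/
import Mathlib


open Matrix BigOperators

set_option maxHeartbeats 1000000

lemma ultra_key (a b c d e f : ℝ)
    (hb0 : 0 ≤ b) (hc0 : 0 ≤ c) (hd0 : 0 ≤ d)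
    (hba : b < a) (hca : c < a) (hbe : b < e) (hde : d < e) (hcf : c < f) (hdf : d < f)
    (h1 : min c d ≤ b) (h2 : min b d ≤ c) (h3 : min b c ≤ d) :
    0 < a*e*f - a*d^2 - b^2*f + 2*b*c*d - c^2*e ∧
    0 ≤ b*f - c*d ∧ 0 ≤ c*e - b*d ∧ 0 ≤ a*d - b*c ∧
    0 ≤ (e*f - d^2) + (c*d - b*f) + (b*d - c*e) ∧
    0 ≤ (c*d - b*f) + (a*f - c^2) + (b*c - a*d) ∧
    0 ≤ (b*d - c*e) + (b*c - a*d) + (a*e - b^2) := by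
  have hcase : (b = c ∧ b ≤ d) ∨ (b = d ∧ b ≤ c) ∨ (c = d ∧ c ≤ b) := by
    rcases le_total c d with h | h
    · have h1' : c ≤ b := by rwa [min_eq_left h] at h1
      rcases le_total b d with h' | h'
      · have h2' : b ≤ c := by rwa [min_eq_left h'] at h2
        exact Or.inl ⟨le_antisymm h2' h1', h'⟩
      · have h2' : d ≤ c := by rwa [min_eq_right h'] at h2
        exact Or.inr (Or.inr ⟨le_antisymm h h2', h1'⟩)
    · have h1' : d ≤ b := by rwa [min_eq_right h] at h1
      rcases le_total b c with h' | h'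
      · have h3' : b ≤ d := by rwa [min_eq_left h'] at h3
        exact Or.inr (Or.inl ⟨le_antisymm h3' h1', h'⟩)
      · have h3' : c ≤ d := by rwa [min_eq_right h'] at h3
        exact Or.inr (Or.inr ⟨le_antisymm h3' h, h'⟩)
  rcases hcase with ⟨rfl, hbd⟩ | ⟨rfl, hbc⟩ | ⟨rfl, hcb⟩
  · -- c = b, b ≤ d
    have hed : (0:ℝ) < e - d := by linarith
    have hfd : (0:ℝ) < f - d := by linarith
    have hefd : (0:ℝ) < e*f - d^2 := by
      linarith [mul_pos hed hfd, mul_nonneg hd0 hed.le, mul_nonneg hd0 hfd.le]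
    have P1 : (0:ℝ) < (a - b) * (e*f - d^2) := mul_pos (by linarith) hefd
    have P2 : (0:ℝ) ≤ b * ((e - d) * (f - d)) := mul_nonneg hb0 (mul_pos hed hfd).le
    have P3 : (0:ℝ) ≤ b * (d - b) * (e + f - 2*d) :=
      mul_nonneg (mul_nonneg hb0 (by linarith)) (by linarith)
    have Q1 : (0:ℝ) ≤ b * (f - d) := mul_nonneg hb0 hfd.le
    have Q2 : (0:ℝ) ≤ b * (e - d) := mul_nonneg hb0 hed.le
    have Q3 : (0:ℝ) ≤ (a - b) * d := mul_nonneg (by linarith) hd0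
    have Q4 : (0:ℝ) ≤ b * (d - b) := mul_nonneg hb0 (by linarith)
    have R1 : (0:ℝ) ≤ (d - b) * (e - d) := mul_nonneg (by linarith) hed.le
    have R2 : (0:ℝ) ≤ (d - b) * (f - d) := mul_nonneg (by linarith) hfd.le
    have R3 : (0:ℝ) ≤ (a - b) * (f - d) := mul_nonneg (by linarith) hfd.le
    have R4 : (0:ℝ) ≤ (a - b) * (e - d) := mul_nonneg (by linarith) hed.le
    refine ⟨by linarith [P1, P2, P3], by linarith [Q1], by linarith [Q2],
      by linarith [Q3, Q4], by linarith [mul_pos hed hfd, R1, R2],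
      by linarith [R3], by linarith [R4]⟩
  · -- d = b, b ≤ c
    have hac : (0:ℝ) < a - c := by linarith
    have hfc : (0:ℝ) < f - c := by linarith
    have hafc : (0:ℝ) < a*f - c^2 := by
      linarith [mul_pos hac hfc, mul_nonneg hc0 hac.le, mul_nonneg hc0 hfc.le]
    have P1 : (0:ℝ) < (e - b) * (a*f - c^2) := mul_pos (by linarith) hafc
    have P2 : (0:ℝ) ≤ b * ((a - c) * (f - c)) := mul_nonneg hb0 (mul_pos hac hfc).le
    have P3 : (0:ℝ) ≤ b * (c - b) * (a + f - 2*c) :=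
      mul_nonneg (mul_nonneg hb0 (by linarith)) (by linarith)
    have Q1 : (0:ℝ) ≤ b * (f - c) := mul_nonneg hb0 hfc.le
    have Q2 : (0:ℝ) ≤ (c - b) * e := mul_nonneg (by linarith) (by linarith)
    have Q2' : (0:ℝ) ≤ b * (e - b) := mul_nonneg hb0 (by linarith)
    have Q3 : (0:ℝ) ≤ b * (a - c) := mul_nonneg hb0 hac.le
    have R1 : (0:ℝ) ≤ (c - b) * (a - c) := mul_nonneg (by linarith) hac.le
    have R2 : (0:ℝ) ≤ (c - b) * (f - c) := mul_nonneg (by linarith) hfc.le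
    have R3 : (0:ℝ) ≤ (e - b) * (f - c) := mul_nonneg (by linarith) hfc.le
    have R4 : (0:ℝ) ≤ (a - c) * (e - b) := mul_nonneg hac.le (by linarith)
    refine ⟨by linarith [P1, P2, P3], by linarith [Q1], by linarith [Q2, Q2'],
      by linarith [Q3], by linarith [R3],
      by linarith [mul_pos hac hfc, R1, R2], by linarith [R4]⟩
  · -- d = c, c ≤ b
    have hab : (0:ℝ) < a - b := by linarith
    have heb : (0:ℝ) < e - b := by linarith
    have haeb : (0:ℝ) < a*e - b^2 := by
      linarith [mul_pos hab heb, mul_nonneg hb0 hab.le, mul_nonneg hb0 heb.le]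
    have P1 : (0:ℝ) < (f - c) * (a*e - b^2) := mul_pos (by linarith) haeb
    have P2 : (0:ℝ) ≤ c * ((a - b) * (e - b)) := mul_nonneg hc0 (mul_pos hab heb).le
    have P3 : (0:ℝ) ≤ c * (b - c) * (a + e - 2*b) :=
      mul_nonneg (mul_nonneg hc0 (by linarith)) (by linarith)
    have Q1 : (0:ℝ) ≤ (b - c) * f := mul_nonneg (by linarith) (by linarith)
    have Q1' : (0:ℝ) ≤ c * (f - c) := mul_nonneg hc0 (by linarith)
    have Q2 : (0:ℝ) ≤ c * (e - b) := mul_nonneg hc0 heb.le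
    have Q3 : (0:ℝ) ≤ c * (a - b) := mul_nonneg hc0 hab.le
    have R1 : (0:ℝ) ≤ (e - b) * (f - c) := mul_nonneg heb.le (by linarith)
    have R2 : (0:ℝ) ≤ (a - b) * (f - c) := mul_nonneg hab.le (by linarith)
    have R3 : (0:ℝ) ≤ (b - c) * (a + e - 2*b) := mul_nonneg (by linarith) (by linarith)
    refine ⟨by linarith [P1, P2, P3], by linarith [Q1, Q1'], by linarith [Q2],
      by linarith [Q3], by linarith [R1], by linarith [R2],
      by linarith [mul_pos hab heb, R3]⟩

theorem ultrametric_3x3_inverse_dominant (U : Matrix (Fin 3) (Fin 3) ℝ)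
    (hsymm : Uᵀ = U) (hnonneg : ∀ i j, 0 ≤ U i j)
    (hultra : ∀ i j k, min (U i k) (U k j) ≤ U i j)
    (hU : IsUnit U.det)
    (hdiag : ∀ i j, i ≠ j → U i j < U i i) :
    (∀ i, 0 ≤ (U⁻¹ *ᵥ (fun _ => (1 : ℝ))) i) ∧
      (∀ j, 0 ≤ ((fun _ => (1 : ℝ)) ᵥ* U⁻¹) j) ∧
      (∀ i j, i ≠ j → U⁻¹ i j ≤ 0) := by
  have hsym : ∀ i j, U j i = U i j := fun i j => congrFun (congrFun hsymm i) j
  have h10 : U 1 0 = U 0 1 := hsym 0 1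
  have h20 : U 2 0 = U 0 2 := hsym 0 2
  have h21 : U 2 1 = U 1 2 := hsym 1 2
  obtain ⟨k1, k2, k3, k4, k5, k6, k7⟩ :=
    ultra_key (U 0 0) (U 0 1) (U 0 2) (U 1 2) (U 1 1) (U 2 2)
      (hnonneg 0 1) (hnonneg 0 2) (hnonneg 1 2)
      (hdiag 0 1 (by decide)) (hdiag 0 2 (by decide))
      (by rw [← h10]; exact hdiag 1 0 (by decide))
      (hdiag 1 2 (by decide))
      (by rw [← h20]; exact hdiag 2 0 (by decide))
      (by rw [← h21]; exact hdiag 2 1 (by decide))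
      (by have := hultra 0 1 2; rwa [h21] at this)
      (by have := hultra 0 2 1; exact this)
      (by have := hultra 1 2 0; rwa [h10] at this)
  have hdetval : U.det = U 0 0 * U 1 1 * U 2 2 - U 0 0 * (U 1 2)^2
      - (U 0 1)^2 * U 2 2 + 2 * U 0 1 * U 0 2 * U 1 2 - (U 0 2)^2 * U 1 1 := by
    rw [Matrix.det_fin_three, h10, h20, h21]; ring
  have hdet : 0 < U.det := by rw [hdetval]; linarith
  have hinv : U⁻¹ = U.det⁻¹ • U.adjugate := by
    rw [Matrix.inv_def, Ring.inverse_eq_inv']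
  have hdinv : 0 ≤ U.det⁻¹ := inv_nonneg.mpr hdet.le
  refine ⟨?_, ?_, ?_⟩
  · intro i
    fin_cases i <;>
      simp [hinv, Matrix.mulVec, dotProduct, Fin.sum_univ_three,
        Matrix.adjugate_fin_three] <;>
    · simp only [h10, h20, h21]
      linarith [mul_nonneg hdinv k5, mul_nonneg hdinv k6, mul_nonneg hdinv k7]
  · intro j
    fin_cases j <;>
      simp [hinv, Matrix.vecMul, dotProduct, Fin.sum_univ_three,
        Matrix.adjugate_fin_three] <;>
    · simp only [h10, h20, h21]
      linarith [mul_nonneg hdinv k5, mul_nonneg hdinv k6, mul_nonneg hdinv k7]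
  · intro i j hij
    fin_cases i <;> fin_cases j <;>
      first
        | exact absurd rfl hij
        | (simp [hinv, Matrix.adjugate_fin_three]
           try simp only [h10, h20, h21]
           linarith [mul_nonneg hdinv k2, mul_nonneg hdinv k3, mul_nonneg hdinv k4])
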